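/- arXiv:1405.5162 — 2 statements merged into one kernel-verified Lean document; each statement's English description precedes it below -/
import Mathlib

section
/- Let u be a complex number with |u| = 1 such that u^a ≠ 1 for every nonzero integer a (i.e., u is not a root of unity). Then the sequence (u^n)_{n≥1} is equidistributed on the unit circle with respect to the Haar probability measure: for every continuous function f : circle → ℂ, (1/n)∑_{i=1}^n f(u^i) converges to ∫ f dμ_Haar as n → ∞. -/
open Filter MeasureTheory

/-- The character `z ↦ z^k` on the circle, as a continuous map. -/
noncomputable def charC (k : ℤ) : C(Circle, ℂ) :=
  ⟨fun z => ((z ^ k : Circle) : ℂ), by continuity⟩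

lemma charC_apply (k : ℤ) (z : Circle) : charC k z = ((z ^ k : Circle) : ℂ) := rfl

lemma charC_mul (k m : ℤ) : charC k * charC m = charC (k + m) := by
  ext z; simp [charC, zpow_add]

lemma charC_star (k : ℤ) : star (charC k) = charC (-k) := by
  ext z
  show (starRingEnd ℂ) ((z ^ k : Circle) : ℂ) = ((z ^ (-k) : Circle) : ℂ)
  rw [zpow_neg, Circle.coe_inv_eq_conj]

lemma charC_zero : charC 0 = 1 := by ext z; simp [charC]

/-- The star subalgebra spanned by the characters. -/
noncomputable def charAlg : StarSubalgebra ℂ C(Circle, ℂ) where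
  carrier := (Submodule.span ℂ (Set.range charC) : Submodule ℂ C(Circle, ℂ))
  add_mem' := fun ha hb => Submodule.add_mem _ ha hb
  zero_mem' := Submodule.zero_mem _
  mul_mem' := by
    intro a b ha hb
    have hmul : Submodule.span ℂ (Set.range charC) * Submodule.span ℂ (Set.range charC) ≤
        Submodule.span ℂ (Set.range charC) := by
      rw [Submodule.span_mul_span]
      apply Submodule.span_le.2
      rintro x ⟨_, ⟨k, rfl⟩, _, ⟨m, rfl⟩, rfl⟩
      exact Submodule.subset_span ⟨k + m, (charC_mul k m).symm⟩
    exact hmul (Submodule.mul_mem_mul ha hb)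
  one_mem' := Submodule.subset_span ⟨0, charC_zero⟩
  algebraMap_mem' := by
    intro r
    rw [Algebra.algebraMap_eq_smul_one]
    exact Submodule.smul_mem _ _ (Submodule.subset_span ⟨0, charC_zero⟩)
  star_mem' := by
    intro a ha
    induction ha using Submodule.span_induction with
    | mem x hx => obtain ⟨k, rfl⟩ := hx; rw [charC_star]; exact Submodule.subset_span ⟨-k, rfl⟩
    | zero => simp only [star_zero]; exact Submodule.zero_mem _
    | add a b _ _ iha ihb => rw [star_add]; exact Submodule.add_mem _ iha ihb
    | smul c a _ iha => rw [star_smul]; exact Submodule.smul_mem _ _ iha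

lemma charAlg_dense : Dense ((Submodule.span ℂ (Set.range charC) : Submodule ℂ C(Circle, ℂ)) :
    Set C(Circle, ℂ)) := by
  have hsep : charAlg.SeparatesPoints := by
    intro x y hxy
    refine ⟨charC 1, ⟨charC 1, Submodule.subset_span ⟨1, rfl⟩, rfl⟩, ?_⟩
    simp only [charC_apply, zpow_one]
    exact fun h => hxy (Subtype.coe_injective h)
  have h := ContinuousMap.starSubalgebra_topologicalClosure_eq_top_of_separatesPoints charAlg hsep
  have h2 : closure (charAlg : Set C(Circle, ℂ)) = Set.univ := by
    rw [← StarSubalgebra.topologicalClosure_coe, h]; rfl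
  exact dense_iff_closure_eq.2 h2

lemma cm_integrable [MeasurableSpace Circle] [BorelSpace Circle] (μ : Measure Circle)
    [IsProbabilityMeasure μ] (g : C(Circle, ℂ)) : Integrable g μ := by
  rw [← integrableOn_univ]
  exact (map_continuous g).continuousOn.integrableOn_compact isCompact_univ

/-- Convergence for characters. -/
lemma tendsto_charC [MeasurableSpace Circle] [BorelSpace Circle] (u : Circle)
    (hu : ∀ a : ℤ, a ≠ 0 → u ^ a ≠ 1)
    (μ : Measure Circle) [μ.IsHaarMeasure] [IsProbabilityMeasure μ] (k : ℤ) :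
    Tendsto (fun n : ℕ => (n : ℂ)⁻¹ * ∑ i ∈ Finset.range n, charC k (u ^ (i + 1)))
      atTop (nhds (∫ z, charC k z ∂μ)) := by
  rcases eq_or_ne k 0 with rfl | hk
  · have hint : ∫ z, charC 0 z ∂μ = 1 := by
      simp [charC_apply, measure_univ]
    rw [hint]
    have heq : ∀ᶠ n : ℕ in atTop,
        (1 : ℂ) = (n : ℂ)⁻¹ * ∑ i ∈ Finset.range n, charC 0 (u ^ (i + 1)) := by
      filter_upwards [eventually_ge_atTop 1] with n hn
      have hn' : (n : ℂ) ≠ 0 := Nat.cast_ne_zero.2 (by omega)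
      simp [charC_apply, inv_mul_cancel₀ hn']
    exact tendsto_const_nhds.congr' heq
  · have huk : ((u ^ k : Circle) : ℂ) ≠ 1 := by
      intro h
      exact hu k hk (Subtype.coe_injective (by simpa using h))
    have hint : ∫ z, charC k z ∂μ = 0 := by
      have h1 : ∫ z, charC k (u * z) ∂μ = ∫ z, charC k z ∂μ :=
        integral_mul_left_eq_self (fun z => charC k z) u
      have h2 : ∫ z, charC k (u * z) ∂μ = ((u ^ k : Circle) : ℂ) * ∫ z, charC k z ∂μ := by
        simp_rw [charC_apply, mul_zpow, Circle.coe_mul]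
        exact integral_const_mul _ _
      have h3 : (((u ^ k : Circle) : ℂ) - 1) * ∫ z, charC k z ∂μ = 0 := by
        rw [sub_mul, one_mul, ← h2, h1, sub_self]
      rcases mul_eq_zero.1 h3 with h | h
      · exact absurd (by linear_combination h) huk
      · exact h
    rw [hint]
    set w : ℂ := ((u ^ k : Circle) : ℂ) with hw
    have hwnorm : ‖w‖ = 1 := by
      simp [hw, Circle.norm_coe]
    have hsum : ∀ n : ℕ, ∑ i ∈ Finset.range n, charC k (u ^ (i + 1)) =
        w * ((w ^ n - 1) / (w - 1)) := by
      intro n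
      have hterm : ∀ i : ℕ, charC k (u ^ (i + 1)) = w ^ (i + 1) := by
        intro i
        rw [charC_apply, hw]
        have : (u ^ (i + 1)) ^ k = (u ^ k) ^ (i + 1) := by
          rw [← zpow_natCast u (i + 1), ← zpow_mul, mul_comm, zpow_mul, zpow_natCast]
        rw [this]
        norm_cast
      simp_rw [hterm, pow_succ']
      rw [← Finset.mul_sum, geom_sum_eq huk]
    have hbound : ∀ n : ℕ, ‖(n : ℂ)⁻¹ * ∑ i ∈ Finset.range n, charC k (u ^ (i + 1))‖ ≤
        (n : ℝ)⁻¹ * (2 / ‖w - 1‖) := by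
      intro n
      rw [hsum, norm_mul, norm_mul, norm_inv, Complex.norm_natCast, norm_div, hwnorm, one_mul]
      have h2 : ‖w ^ n - 1‖ ≤ 2 := by
        calc ‖w ^ n - 1‖ ≤ ‖w ^ n‖ + ‖(1 : ℂ)‖ := norm_sub_le _ _
        _ = 2 := by rw [norm_pow, hwnorm, norm_one]; norm_num
      gcongr
    have hlim : Tendsto (fun n : ℕ => (n : ℝ)⁻¹ * (2 / ‖w - 1‖)) atTop (nhds 0) := by
      simpa using (tendsto_inv_atTop_nhds_zero_nat (𝕜 := ℝ)).mul_const (2 / ‖w - 1‖)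
    exact squeeze_zero_norm hbound hlim

/-- **Equidistribution of powers of a non-root-of-unity point on the circle.**
If `u` lies on the unit circle and `u ^ a ≠ 1` for every nonzero integer `a`, then the
sequence `(u^n)_{n ≥ 1}` is equidistributed on the circle with respect to the Haar
probability measure. -/
theorem stmt_1 [MeasurableSpace Circle] [BorelSpace Circle] (u : Circle) (hu : ∀ a : ℤ, a ≠ 0 → u ^ a ≠ 1)
    (μ : Measure Circle) [μ.IsHaarMeasure] [IsProbabilityMeasure μ]
    (f : Circle → ℂ) (hf : Continuous f) :
    Tendsto (fun n : ℕ => (n : ℂ)⁻¹ * ∑ i ∈ Finset.range n, f (u ^ (i + 1)))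
      atTop (nhds (∫ z, f z ∂μ)) := by
  have key : ∀ g ∈ Submodule.span ℂ (Set.range charC),
      Tendsto (fun n : ℕ => (n : ℂ)⁻¹ * ∑ i ∈ Finset.range n, g (u ^ (i + 1)))
        atTop (nhds (∫ z, g z ∂μ)) := by
    intro g hg
    induction hg using Submodule.span_induction with
    | mem x hx => obtain ⟨k, rfl⟩ := hx; exact tendsto_charC u hu μ k
    | zero => simpa using (tendsto_const_nhds : Tendsto (fun _ : ℕ => (0 : ℂ)) atTop _)
    | add a b _ _ iha ihb =>
        have heq : ∀ n : ℕ, (n : ℂ)⁻¹ * ∑ i ∈ Finset.range n, (a + b) (u ^ (i + 1)) =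
            ((n : ℂ)⁻¹ * ∑ i ∈ Finset.range n, a (u ^ (i + 1))) +
              ((n : ℂ)⁻¹ * ∑ i ∈ Finset.range n, b (u ^ (i + 1))) := by
          intro n
          simp [ContinuousMap.add_apply, Finset.sum_add_distrib, mul_add]
        simp_rw [heq, ContinuousMap.add_apply]
        rw [integral_add (cm_integrable μ a) (cm_integrable μ b)]
        exact iha.add ihb
    | smul c a _ iha =>
        have heq : ∀ n : ℕ, (n : ℂ)⁻¹ * ∑ i ∈ Finset.range n, (c • a) (u ^ (i + 1)) =
            c * ((n : ℂ)⁻¹ * ∑ i ∈ Finset.range n, a (u ^ (i + 1))) := by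
          intro n
          simp only [ContinuousMap.smul_apply, smul_eq_mul, ← Finset.mul_sum]
          ring
        simp_rw [heq, ContinuousMap.smul_apply, smul_eq_mul]
        rw [integral_const_mul]
        exact iha.const_mul c
  set F : C(Circle, ℂ) := ⟨f, hf⟩ with hF
  rw [Metric.tendsto_atTop]
  intro ε hε
  obtain ⟨g, hgmem, hgF⟩ : ∃ g ∈ Submodule.span ℂ (Set.range charC), ‖F - g‖ < ε / 3 := by
    have hF' := charAlg_dense F
    rw [Metric.mem_closure_iff] at hF'
    obtain ⟨g, hg, hdist⟩ := hF' (ε / 3) (by linarith)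
    exact ⟨g, hg, by rwa [← dist_eq_norm]⟩
  have hg := key g hgmem
  rw [Metric.tendsto_atTop] at hg
  obtain ⟨N, hN⟩ := hg (ε / 3) (by linarith)
  refine ⟨max N 1, fun n hn => ?_⟩
  have hn1 : 1 ≤ n := le_trans (le_max_right _ _) hn
  have hnN : N ≤ n := le_trans (le_max_left _ _) hn
  have hdiff : ∀ h : C(Circle, ℂ),
      ‖(n : ℂ)⁻¹ * ∑ i ∈ Finset.range n, h (u ^ (i + 1))‖ ≤ ‖h‖ := by
    intro h
    rw [norm_mul, norm_inv, Complex.norm_natCast]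
    have hsum : ‖∑ i ∈ Finset.range n, h (u ^ (i + 1))‖ ≤ n * ‖h‖ := by
      calc ‖∑ i ∈ Finset.range n, h (u ^ (i + 1))‖
          ≤ ∑ i ∈ Finset.range n, ‖h (u ^ (i + 1))‖ := norm_sum_le _ _
        _ ≤ ∑ _i ∈ Finset.range n, ‖h‖ :=
            Finset.sum_le_sum (fun i _ => h.norm_coe_le_norm _)
        _ = n * ‖h‖ := by simp
    calc (n : ℝ)⁻¹ * ‖∑ i ∈ Finset.range n, h (u ^ (i + 1))‖
        ≤ (n : ℝ)⁻¹ * (n * ‖h‖) := by gcongr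
      _ = ‖h‖ := by
          have hn' : (n : ℝ) ≠ 0 := Nat.cast_ne_zero.2 (by omega)
          field_simp
  have hXg : dist ((n : ℂ)⁻¹ * ∑ i ∈ Finset.range n, f (u ^ (i + 1)))
      ((n : ℂ)⁻¹ * ∑ i ∈ Finset.range n, g (u ^ (i + 1))) ≤ ‖F - g‖ := by
    rw [dist_eq_norm]
    have hrw : ((n : ℂ)⁻¹ * ∑ i ∈ Finset.range n, f (u ^ (i + 1))) -
        ((n : ℂ)⁻¹ * ∑ i ∈ Finset.range n, g (u ^ (i + 1))) =
        (n : ℂ)⁻¹ * ∑ i ∈ Finset.range n, (F - g) (u ^ (i + 1)) := by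
      simp only [ContinuousMap.sub_apply, Finset.sum_sub_distrib, mul_sub]
      rfl
    rw [hrw]
    exact hdiff (F - g)
  have hint : dist (∫ z, g z ∂μ) (∫ z, f z ∂μ) ≤ ‖F - g‖ := by
    show dist (∫ z, g z ∂μ) (∫ z, F z ∂μ) ≤ ‖F - g‖
    rw [dist_eq_norm, ← integral_sub (cm_integrable μ g) (cm_integrable μ F)]
    have : ‖∫ z, (g z - F z) ∂μ‖ ≤ ‖g - F‖ * (μ Set.univ).toReal :=
      norm_integral_le_of_norm_le_const (Eventually.of_forall fun z => by
        simpa [ContinuousMap.sub_apply] using (g - F).norm_coe_le_norm z)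
    simpa [measure_univ, norm_sub_rev] using this
  calc dist ((n : ℂ)⁻¹ * ∑ i ∈ Finset.range n, f (u ^ (i + 1))) (∫ z, f z ∂μ)
      ≤ dist ((n : ℂ)⁻¹ * ∑ i ∈ Finset.range n, f (u ^ (i + 1)))
          ((n : ℂ)⁻¹ * ∑ i ∈ Finset.range n, g (u ^ (i + 1))) +
        dist ((n : ℂ)⁻¹ * ∑ i ∈ Finset.range n, g (u ^ (i + 1))) (∫ z, g z ∂μ) +
        dist (∫ z, g z ∂μ) (∫ z, f z ∂μ) := dist_triangle4 _ _ _ _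
    _ < ε / 3 + ε / 3 + ε / 3 := by
        exact add_lt_add (add_lt_add (lt_of_le_of_lt hXg hgF) (hN n hnN))
          (lt_of_le_of_lt hint hgF)
    _ = ε := by ring
end

section
/- (Kubota's rank lemma) Let k, g ≥ 1 and let D be a k×g matrix over ℚ that has at least one column all of whose entries equal 1. Let U denote the k×g matrix all of whose entries equal 1. Then the 2k×2g block matrix D̄ = [[D, U−D],[U−D, D]] satisfies rank(D̄) = rank(D) + 1. -/
open Matrix

/-- **Kubota's rank lemma.**  Let `D` be a `k × g` matrix over `ℚ` with at least one column
all of whose entries equal `1`, and let `U` be the `k × g` all-ones matrix.  Then the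
`2k × 2g` block matrix `[[D, U - D], [U - D, D]]` has rank `rank(D) + 1`. -/
theorem stmt_12 (k g : ℕ) (hk : 1 ≤ k) (hg : 1 ≤ g)
    (D : Matrix (Fin k) (Fin g) ℚ) (hcol : ∃ j : Fin g, ∀ i : Fin k, D i j = 1)
    (U : Matrix (Fin k) (Fin g) ℚ) (hU : ∀ i j, U i j = 1) :
    (Matrix.fromBlocks D (U - D) (U - D) D).rank = D.rank + 1 := by
  classical
  obtain ⟨j₀, hj₀⟩ := hcol
  have i₀ : Fin k := ⟨0, hk⟩
  set M := Matrix.fromBlocks D (U - D) (U - D) D with hM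
  set one : Fin k → ℚ := fun _ => 1 with hone_def
  -- U *ᵥ y is a multiple of the all-ones vector
  have hUmul : ∀ y : Fin g → ℚ, U *ᵥ y = (∑ j, y j) • one := by
    intro y; funext i
    simp [Matrix.mulVec, dotProduct, hU, hone_def]
  have hDδ : D *ᵥ Pi.single j₀ 1 = one := by
    funext i
    simp [Matrix.mulVec_single, hj₀, hone_def]
  -- the embedding v ↦ (v, -v)
  let φ : (Fin k → ℚ) →ₗ[ℚ] (Fin k ⊕ Fin k → ℚ) :=
    { toFun := fun v => Sum.elim v (-v)
      map_add' := by intro v w; funext i; cases i <;> simp <;> ring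
      map_smul' := by intro c v; funext i; cases i <;> simp }
  have hφinj : Function.Injective φ := by
    intro v w h
    funext i
    exact congrFun h (Sum.inl i)
  set u : Fin k ⊕ Fin k → ℚ := Sum.elim one 0 with hu_def
  set C := LinearMap.range D.mulVecLin with hC
  set W := LinearMap.range M.mulVecLin with hW
  -- u ∈ W
  have hu : u ∈ W := by
    refine ⟨Sum.elim (Pi.single j₀ 1) 0, ?_⟩
    show M *ᵥ _ = u
    rw [hM, Matrix.fromBlocks_mulVec, Sum.elim_comp_inl, Sum.elim_comp_inr]
    funext i
    cases i with
    | inl i =>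
        simp [Matrix.sub_mulVec, hUmul, hDδ, hu_def, hone_def, hj₀, hU]
    | inr i =>
        simp [Matrix.sub_mulVec, hUmul, hDδ, hu_def, hone_def, hj₀, hU]
  -- φ(one) ∈ W
  have hφ1 : φ one ∈ W := by
    refine ⟨Sum.elim (Pi.single j₀ 1) (-(Pi.single j₀ 1)), ?_⟩
    show M *ᵥ _ = φ one
    rw [hM, Matrix.fromBlocks_mulVec, Sum.elim_comp_inl, Sum.elim_comp_inr]
    funext i
    cases i with
    | inl i =>
        simp [Matrix.sub_mulVec, Matrix.mulVec_neg, hUmul, hDδ, φ, hone_def, hj₀, hU]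
    | inr i =>
        simp [Matrix.sub_mulVec, Matrix.mulVec_neg, hUmul, hDδ, φ, hone_def, hj₀, hU]
  -- φ maps C into W
  have hCmapW : ∀ v ∈ C, φ v ∈ W := by
    rintro _ ⟨y, rfl⟩
    have key : φ (D.mulVecLin y)
        = (1/2 : ℚ) • (M.mulVecLin (Sum.elim y (-y))) + ((∑ j, y j)/2) • φ one := by
      show φ (D *ᵥ y) = (1/2 : ℚ) • (M *ᵥ (Sum.elim y (-y))) + ((∑ j, y j)/2) • φ one
      rw [hM, Matrix.fromBlocks_mulVec, Sum.elim_comp_inl, Sum.elim_comp_inr]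
      funext i
      cases i with
      | inl i =>
          simp [Matrix.sub_mulVec, Matrix.mulVec_neg, hUmul, φ, hone_def]
          ring
      | inr i =>
          simp [Matrix.sub_mulVec, Matrix.mulVec_neg, hUmul, φ, hone_def]
          ring
    rw [key]
    exact W.add_mem (W.smul_mem _ ⟨_, rfl⟩) (W.smul_mem _ hφ1)
  -- W = C.map φ ⊔ span {u}
  have hWeq : W = C.map φ ⊔ Submodule.span ℚ {u} := by
    apply le_antisymm
    · rintro _ ⟨x, rfl⟩
      have key : M.mulVecLin x
          = φ (D *ᵥ (x ∘ Sum.inl) - D *ᵥ (x ∘ Sum.inr))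
            + (∑ j, x (Sum.inr j)) • u + (∑ j, x (Sum.inl j)) • (u - φ one) := by
        show M *ᵥ x = _
        rw [hM, Matrix.fromBlocks_mulVec]
        funext i
        cases i with
        | inl i =>
            simp [Matrix.sub_mulVec, hUmul, φ, hu_def, hone_def]
            ring
        | inr i =>
            simp [Matrix.sub_mulVec, hUmul, φ, hu_def, hone_def]
            ring
      rw [key]
      have h1 : φ (D *ᵥ (x ∘ Sum.inl) - D *ᵥ (x ∘ Sum.inr)) ∈ C.map φ ⊔ Submodule.span ℚ {u} :=
        Submodule.mem_sup_left ⟨_, ⟨x ∘ Sum.inl - x ∘ Sum.inr, by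
          simp [Matrix.mulVecLin_apply, Matrix.mulVec_sub]⟩, rfl⟩
      have h2 : u ∈ C.map φ ⊔ Submodule.span ℚ {u} :=
        Submodule.mem_sup_right (Submodule.mem_span_singleton_self u)
      have h3 : φ one ∈ C.map φ ⊔ Submodule.span ℚ {u} :=
        Submodule.mem_sup_left ⟨one, ⟨Pi.single j₀ 1, hDδ⟩, rfl⟩
      exact Submodule.add_mem _
        (Submodule.add_mem _ h1 (Submodule.smul_mem _ _ h2))
        (Submodule.smul_mem _ _ (Submodule.sub_mem _ h2 h3))
    · refine sup_le ?_ ?_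
      · rintro _ ⟨v, hv, rfl⟩
        exact hCmapW v hv
      · rw [Submodule.span_le, Set.singleton_subset_iff]
        exact hu
  -- disjointness
  have hdisj : C.map φ ⊓ Submodule.span ℚ {u} = ⊥ := by
    rw [Submodule.eq_bot_iff]
    rintro x ⟨⟨v, _, rfl⟩, hx2⟩
    obtain ⟨c, hc⟩ := Submodule.mem_span_singleton.mp hx2
    have hv : v = 0 := by
      funext i
      have h2 := congrFun hc (Sum.inr i)
      simp [φ, hu_def] at h2
      exact h2
    simp [hv, map_zero]
  have hune : u ≠ 0 := by
    intro h
    have := congrFun h (Sum.inl i₀)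
    simp [hu_def, hone_def] at this
  -- finrank computation
  have hrankM : M.rank = Module.finrank ℚ (↥(C.map φ ⊔ Submodule.span ℚ {u})) := by
    rw [Matrix.rank, ← hW, hWeq]
  have hfin := Submodule.finrank_sup_add_finrank_inf_eq (C.map φ) (Submodule.span ℚ {u})
  rw [hdisj] at hfin
  simp only [finrank_bot, add_zero] at hfin
  have hmap : Module.finrank ℚ (↥(C.map φ)) = D.rank := by
    rw [Matrix.rank, hC]
    exact (LinearEquiv.finrank_eq (Submodule.equivMapOfInjective φ hφinj C)).symm
  rw [hrankM, hfin, hmap, finrank_span_singleton hune]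
end
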